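/- Let v : ℝ≥0 → ℝ be C¹ with v' < 0 on (0,∞), and let k ≥ 0 and R₀, ..., R_{n−1} > 0 with R₀ = R₁ and R_{n−1} = R_{n−2}. Then k·[Σ_{i=1}^{n−1} (sign(R_{i−1}−k) − sign(Rᵢ−k))(v(Rᵢ)−v(k))φᵢ + (1+sign(R₀−k))(v(k)−v(R₀))φ₀ + (1+sign(R_{n−1}−k))(v(0)−v(k))φₙ] ≥ 0 for any nonnegative weights φ₀, ..., φₙ ≥ 0. -/

import Mathlib

private lemma sign_bounds (x : ℝ) : -1 ≤ Real.sign x ∧ Real.sign x ≤ 1 := by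
  rcases Real.sign_apply_eq x with h | h | h <;> rw [h] <;> norm_num

/-- Key algebraic sign inequality in the proof of the Kružkov entropy inequality for
the particle approximation: with `v` C¹ and strictly decreasing on `(0,∞)`, `k ≥ 0`,
positive densities `R₀,...,R_{n-1}` with `R₀ = R₁` and `R_{n-1} = R_{n-2}`, and
nonnegative weights `φ₀,...,φₙ`, the displayed combination is nonnegative. -/
theorem entropy_sign_inequality
    (v : ℝ → ℝ) (hv : ContDiffOn ℝ 1 v (Set.Ici 0))
    (hv' : ∀ ρ : ℝ, 0 < ρ → deriv v ρ < 0)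
    (k : ℝ) (hk : 0 ≤ k)
    (n : ℕ) (hn : 3 ≤ n)
    (R : ℕ → ℝ) (hR : ∀ i ≤ n - 1, 0 < R i)
    (hR0 : R 0 = R 1) (hRn : R (n-1) = R (n-2))
    (φ : ℕ → ℝ) (hφ : ∀ i ≤ n, 0 ≤ φ i) :
    0 ≤ k * ((∑ i ∈ Finset.Icc 1 (n-1),
        (Real.sign (R (i-1) - k) - Real.sign (R i - k)) * (v (R i) - v k) * φ i)
      + (1 + Real.sign (R 0 - k)) * (v k - v (R 0)) * φ 0
      + (1 + Real.sign (R (n-1) - k)) * (v 0 - v k) * φ n) := by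
  have hanti : StrictAntiOn v (Set.Ici 0) := by
    apply strictAntiOn_of_deriv_neg (convex_Ici 0) hv.continuousOn
    intro x hx
    rw [interior_Ici] at hx
    exact hv' x hx
  have hmono : ∀ a b : ℝ, 0 ≤ a → 0 ≤ b → a ≤ b → v b ≤ v a := by
    intro a b ha hb hab
    rcases eq_or_lt_of_le hab with rfl | h
    · exact le_refl _
    · exact (hanti ha hb h).le
  -- each summand is nonneg
  have hterm : ∀ b : ℝ, 0 < b → ∀ a : ℝ,
      0 ≤ (Real.sign a - Real.sign (b - k)) * (v b - v k) := by
    intro b hb a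
    rcases lt_trichotomy b k with h | h | h
    · have hs : Real.sign (b - k) = -1 := Real.sign_of_neg (by linarith)
      apply mul_nonneg
      · rw [hs]; linarith [(sign_bounds a).1]
      · linarith [hmono b k hb.le hk h.le]
    · subst h; simp
    · have hs : Real.sign (b - k) = 1 := Real.sign_of_pos (by linarith)
      have h1 : Real.sign a - Real.sign (b - k) ≤ 0 := by
        rw [hs]; linarith [(sign_bounds a).2]
      have h2 : v b - v k ≤ 0 := by linarith [hmono k b hk hb.le h.le]
      nlinarith
  apply mul_nonneg hk
  have h1 : 0 ≤ (1 + Real.sign (R 0 - k)) * (v k - v (R 0)) := by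
    have hb := hR 0 (by omega)
    rcases lt_trichotomy (R 0) k with h | h | h
    · rw [Real.sign_of_neg (by linarith)]; simp
    · rw [h]; simp
    · apply mul_nonneg
      · linarith [(sign_bounds (R 0 - k)).1]
      · linarith [hmono k (R 0) hk hb.le h.le]
  have h2 : 0 ≤ (1 + Real.sign (R (n-1) - k)) * (v 0 - v k) := by
    apply mul_nonneg
    · linarith [(sign_bounds (R (n-1) - k)).1]
    · linarith [hmono 0 k le_rfl hk hk]
  have hsum : 0 ≤ ∑ i ∈ Finset.Icc 1 (n-1),
      (Real.sign (R (i-1) - k) - Real.sign (R i - k)) * (v (R i) - v k) * φ i := by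
    apply Finset.sum_nonneg
    intro i hi
    rw [Finset.mem_Icc] at hi
    exact mul_nonneg (hterm (R i) (hR i hi.2) _) (hφ i (by omega))
  have := mul_nonneg h1 (hφ 0 (by omega))
  have := mul_nonneg h2 (hφ n le_rfl)
  linarith
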